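/- Suppose q ≥ 1 and Z Zᵀ is invertible. Fix A⋆ ∈ ℝ^{q×d} and B⋆ ∈ ℝ^{q×m}. Then the following are equivalent: (i) for every A ∈ ℝ^{q×d} and B ∈ ℝ^{q×m}, A Z + B U = A⋆ Z + B⋆ U implies B = B⋆ (sample-identifiability of the control channel); (ii) the matrix U_⊥ U_⊥ᵀ = U M_Z Uᵀ is positive definite. -/

import Mathlib

open Matrix

private lemma vecMulVec_mul' {q m n : ℕ} (a : Fin q → ℝ) (b : Fin m → ℝ)
    (M : Matrix (Fin m) (Fin n) ℝ) :
    vecMulVec a b * M = vecMulVec a (b ᵥ* M) := by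
  ext i j
  simp [vecMulVec, Matrix.mul_apply, Matrix.vecMul, dotProduct, Finset.mul_sum, mul_assoc]

/-- With `Z Zᵀ` invertible and `q ≥ 1`, sample-identifiability of the
control channel `B` is equivalent to positive definiteness of `U M_Z Uᵀ`. -/
theorem control_channel_identifiable_iff_posDef
    (d m q N : ℕ) (hq : 1 ≤ q) (hN : 1 ≤ N)
    (Z : Matrix (Fin d) (Fin N) ℝ) (U : Matrix (Fin m) (Fin N) ℝ)
    (hZ : IsUnit (Z * Zᵀ).det)
    (P_Z : Matrix (Fin N) (Fin N) ℝ) (hP : P_Z = Zᵀ * (Z * Zᵀ)⁻¹ * Z)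
    (M_Z : Matrix (Fin N) (Fin N) ℝ) (hM : M_Z = 1 - P_Z)
    (Astar : Matrix (Fin q) (Fin d) ℝ) (Bstar : Matrix (Fin q) (Fin m) ℝ) :
    (∀ (A : Matrix (Fin q) (Fin d) ℝ) (B : Matrix (Fin q) (Fin m) ℝ),
        A * Z + B * U = Astar * Z + Bstar * U → B = Bstar)
      ↔ (U * M_Z * Uᵀ).PosDef := by
  set S := Z * Zᵀ with hS
  have hSinv : S⁻¹ * S = 1 := Matrix.nonsing_inv_mul S hZ
  have hSinv' : S * S⁻¹ = 1 := Matrix.mul_nonsing_inv S hZ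
  -- symmetry of M_Z
  have hPsymm : P_Zᵀ = P_Z := by
    rw [hP]
    rw [Matrix.transpose_mul, Matrix.transpose_mul, Matrix.transpose_nonsing_inv,
      Matrix.transpose_transpose, Matrix.transpose_mul, Matrix.transpose_transpose]
    rw [← hS, Matrix.mul_assoc]
  have hMsymm : M_Zᵀ = M_Z := by
    rw [hM, Matrix.transpose_sub, Matrix.transpose_one, hPsymm]
  -- Z * P_Z = Z
  have hZP : Z * P_Z = Z := by
    rw [hP, ← Matrix.mul_assoc, ← Matrix.mul_assoc, ← hS, hSinv', Matrix.one_mul]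
  have hZM : Z * M_Z = 0 := by
    rw [hM, Matrix.mul_sub, Matrix.mul_one, hZP, sub_self]
  -- idempotency
  have hPP : P_Z * P_Z = P_Z := by
    have : P_Z * P_Z = Zᵀ * (Z*Zᵀ)⁻¹ * (Z * P_Z) := by
      rw [hP, ← hS]; simp only [Matrix.mul_assoc]
    rw [this, hZP, ← hP]
  have hMM : M_Z * M_Z = M_Z := by
    rw [hM, Matrix.sub_mul, Matrix.mul_sub, Matrix.mul_sub, Matrix.one_mul, Matrix.mul_one,
      Matrix.one_mul, hPP]
    abel
  set W := U * M_Z with hW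
  have hG : U * M_Z * Uᵀ = W * Wᵀ := by
    rw [hW, Matrix.transpose_mul, hMsymm, Matrix.mul_assoc U M_Z (M_Z * Uᵀ),
      ← Matrix.mul_assoc M_Z M_Z Uᵀ, hMM, ← Matrix.mul_assoc]
  have hHerm : (U * M_Z * Uᵀ).IsHermitian := by
    unfold Matrix.IsHermitian
    rw [Matrix.conjTranspose_eq_transpose_of_trivial, Matrix.transpose_mul, Matrix.transpose_mul,
      Matrix.transpose_transpose, hMsymm, Matrix.mul_assoc]
  -- quadratic form as a Gram dot product
  have hquad : ∀ x : Fin m → ℝ, x ⬝ᵥ (U * M_Z * Uᵀ) *ᵥ x = (x ᵥ* W) ⬝ᵥ (x ᵥ* W) := by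
    intro x
    rw [hG, ← Matrix.mulVec_mulVec, Matrix.dotProduct_mulVec, Matrix.mulVec_transpose]
  constructor
  · -- identifiability ⇒ PosDef
    intro H
    refine posDef_iff_dotProduct_mulVec.mpr ⟨hHerm, fun x hx => ?_⟩
    have hxW : x ᵥ* W ≠ 0 := by
      intro hxW0
      -- u = x ᵥ* U lies in row space of Z
      set u := x ᵥ* U with hu
      have huM : u ᵥ* M_Z = 0 := by
        rw [hu, Matrix.vecMul_vecMul, ← hW, hxW0]
      have huP : u ᵥ* P_Z = u := by
        have := congrArg (fun v => u - v) huM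
        simpa [hM, Matrix.vecMul_sub, Matrix.vecMul_one, sub_sub_cancel] using this
      set a : Fin d → ℝ := (u ᵥ* Zᵀ) ᵥ* S⁻¹ with ha
      have huZ : a ᵥ* Z = u := by
        rw [ha, Matrix.vecMul_vecMul, Matrix.vecMul_vecMul, ← Matrix.mul_assoc, ← hP, huP]
      set e : Fin q → ℝ := Pi.single ⟨0, hq⟩ 1 with he
      have := H (Astar - vecMulVec e a) (Bstar + vecMulVec e x) ?_
      · have hvmv : vecMulVec e x = 0 := by
          have h0 := congrArg (fun M => M - Bstar) this
          simpa [add_sub_cancel_left] using h0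
        apply hx
        funext j
        have := congrFun (congrFun hvmv ⟨0, hq⟩) j
        simpa [vecMulVec, he, Pi.single_apply] using this
      · rw [Matrix.sub_mul, Matrix.add_mul, vecMulVec_mul', vecMulVec_mul', huZ, ← hu]
        abel
    have hpos : (x ᵥ* W) ⬝ᵥ (x ᵥ* W) > 0 := by
      have := dotProduct_self_eq_zero (v := x ᵥ* W)
      have hnn : 0 ≤ (x ᵥ* W) ⬝ᵥ (x ᵥ* W) := by
        simpa using dotProduct_self_star_nonneg (x ᵥ* W)
      rcases lt_or_eq_of_le hnn with h | h
      · exact h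
      · exact absurd (this.mp h.symm) hxW
    rw [star_trivial, hquad x]; exact hpos
  · -- PosDef ⇒ identifiability
    intro hPD A B hAB
    set C := B - Bstar with hC
    have hCU : C * U = (Astar - A) * Z := by
      have := congrArg (fun M => M - A * Z - Bstar * U) hAB
      rw [hC, Matrix.sub_mul, Matrix.sub_mul]
      abel_nf
      abel_nf at this
      linear_combination (norm := abel) this
    have hCW : C * W = 0 := by
      rw [hW, ← Matrix.mul_assoc, hCU, Matrix.mul_assoc, hZM, Matrix.mul_zero]
    have hC0 : C = 0 := by
      ext i j
      by_contra hij
      have hrow : (fun j => C i j) ≠ 0 := by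
        intro h0; exact hij (by simpa using congrFun h0 j)
      have hrowW : (fun j => C i j) ᵥ* W = 0 := by
        funext k
        have := congrFun (congrFun hCW i) k
        simpa [Matrix.mul_apply, Matrix.vecMul, dotProduct] using this
      have := (posDef_iff_dotProduct_mulVec.mp hPD).2 hrow
      rw [show star (fun j => C i j) = (fun j => C i j) by simp] at this
      rw [hquad _] at this
      rw [hrowW] at this
      simp at this
    have : B = Bstar := by
      have := congrArg (fun M => M + Bstar) hC0
      simpa [hC, sub_add_cancel] using this
    exact this
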